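/- The standard mutation operations σ_2, …, σ_n on exceptional collections of length n satisfy the braid relations: σ_i∘σ_{i+1}∘σ_i = σ_{i+1}∘σ_i∘σ_{i+1}, and σ_i∘σ_j = σ_j∘σ_i when |i−j| > 1. Hence they generate an action of the n-string braid group on the set of exceptional collections of length n. -/

import Mathlib

open CategoryTheory Limits Pretriangulated

universe v u

variable (C : Type u) [Category.{v} C] [Preadditive C] [HasZeroObject C]
  [HasShift C ℤ] [∀ n : ℤ, (CategoryTheory.shiftFunctor C n).Additive] [Pretriangulated C]
  [CategoryTheory.Linear ℂ C]

/-- All graded morphisms from `X` to `Y` vanish. -/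
def NoHoms (X Y : C) : Prop := ∀ n : ℤ, ∀ f : X ⟶ Y⟦n⟧, f = 0

/-- The category `C` is of finite type: total graded Hom spaces are finite dimensional. -/
def FiniteType : Prop :=
  ∀ X Y : C, (∀ n : ℤ, FiniteDimensional ℂ (X ⟶ Y⟦n⟧)) ∧
    {n : ℤ | ∃ f : X ⟶ Y⟦n⟧, f ≠ 0}.Finite

/-- An exceptional object: `Hom^•(E,E) = ℂ`, concentrated in degree `0`. -/
def IsExceptional (E : C) : Prop :=
  (∀ n : ℤ, n ≠ 0 → ∀ f : E ⟶ E⟦n⟧, f = 0) ∧ Module.finrank ℂ (E ⟶ E) = 1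

/-- Membership in the smallest strictly full triangulated subcategory containing `S`. -/
inductive genTriang (S : Set C) : C → Prop
  | of (X : C) (hX : X ∈ S) : genTriang S X
  | isZero (X : C) (hX : IsZero X) : genTriang S X
  | iso {X Y : C} (e : X ≅ Y) (hX : genTriang S X) : genTriang S Y
  | shift (X : C) (n : ℤ) (hX : genTriang S X) : genTriang S (X⟦n⟧)
  | ext₂ (T : Triangle C) (hT : T ∈ distTriang C) (h₁ : genTriang S T.obj₁)
      (h₃ : genTriang S T.obj₃) : genTriang S T.obj₂

/-- The left orthogonal `^⊥S`. -/
def leftOrth (S : Set C) : Set C := {X | ∀ Y ∈ S, NoHoms C X Y}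

/-- The right orthogonal `S^⊥`. -/
def rightOrth (S : Set C) : Set C := {X | ∀ Y ∈ S, NoHoms C Y X}

/-- `Y` is the left mutation of `X` through (the subcategory generated by) `S`. -/
def IsLeftMutation (S : Set C) (X Y : C) : Prop :=
  X ∈ leftOrth C S ∧ Y ∈ rightOrth C S ∧
    ∃ (A : C) (f : A ⟶ X) (g : X ⟶ Y) (h : Y ⟶ A⟦(1:ℤ)⟧),
      genTriang C S A ∧ Triangle.mk f g h ∈ distTriang C

/-- `X` is the right mutation of `Y` through (the subcategory generated by) `S`. -/
def IsRightMutation (S : Set C) (X Y : C) : Prop :=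
  X ∈ leftOrth C S ∧ Y ∈ rightOrth C S ∧
    ∃ (A : C) (f : X ⟶ Y) (g : Y ⟶ A) (h : A ⟶ X⟦(1:ℤ)⟧),
      genTriang C S A ∧ Triangle.mk f g h ∈ distTriang C

/-- `IterLeftMut l X Y` : `Y ≅ L_{E₁} ⋯ L_{E_k} (X)` where `l = [E₁, …, E_k]`. -/
def IterLeftMut : List C → C → C → Prop
  | [], X, Y => Nonempty (X ≅ Y)
  | (E :: t), X, Y => ∃ Z, IterLeftMut t X Z ∧ IsLeftMutation C {E} Z Y

/-- `IterRightMut l Y X` : `X ≅ R_{E_k} ⋯ R_{E₁} (Y)` where `l = [E₁, …, E_k]`. -/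
def IterRightMut : List C → C → C → Prop
  | [], Y, X => Nonempty (Y ≅ X)
  | (E :: t), Y, X => ∃ Z, IsRightMutation C {E} Z Y ∧ IterRightMut t Z X

/-- `E 0, …, E (n-1)` is an exceptional collection. -/
def ExcCollection (n : ℕ) (E : ℕ → C) : Prop :=
  (∀ i < n, IsExceptional C (E i)) ∧
    ∀ i j, i < j → j < n → NoHoms C (E j) (E i)

/-- The set of objects of the collection `E 0, …, E (n-1)`. -/
def collSet (n : ℕ) (E : ℕ → C) : Set C := {X | ∃ i < n, X = E i}


/-- `MutAt i E E'` : the collection `E'` is obtained from `E` by the standard mutation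
operation acting at the (0-indexed) pair of positions `(i, i+1)`, i.e.
`E' i = L_{E i}(E (i+1))[-1]`, `E' (i+1) = E i`, and all other members are unchanged. -/
def MutAt (i : ℕ) (E E' : ℕ → C) : Prop :=
  (∀ j, j ≠ i → j ≠ i + 1 → E' j = E j) ∧ E' (i + 1) = E i ∧
    IsLeftMutation C ({E i} : Set C) (E (i + 1)) ((E' i)⟦(1:ℤ)⟧)

section Lemmas

set_option linter.unusedSectionVars false

variable {C}

lemma noHoms_zero {X Y : C} (h : NoHoms C X Y) (f : X ⟶ Y) : f = 0 := by
  have h0 := h 0 (f ≫ (shiftFunctorZero C ℤ).inv.app Y)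
  have : f = (f ≫ (shiftFunctorZero C ℤ).inv.app Y) ≫ (shiftFunctorZero C ℤ).hom.app Y := by
    simp
  rw [this, h0, Limits.zero_comp]

lemma noHoms_of_iso_src {X X' Y : C} (e : X ≅ X') (h : NoHoms C X Y) : NoHoms C X' Y := by
  intro n f
  have : e.hom ≫ f = 0 := h n _
  calc f = e.inv ≫ e.hom ≫ f := by simp
  _ = 0 := by rw [this, Limits.comp_zero]

lemma noHoms_of_iso_tgt {X Y Y' : C} (e : Y ≅ Y') (h : NoHoms C X Y) : NoHoms C X Y' := by
  intro n f
  have h0 : f ≫ (shiftFunctor C n).map e.inv = 0 := h n _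
  have hid : (shiftFunctor C n).map e.inv ≫ (shiftFunctor C n).map e.hom = 𝟙 _ :=
    ((shiftFunctor C n).mapIso e).inv_hom_id
  calc f = (f ≫ (shiftFunctor C n).map e.inv) ≫ (shiftFunctor C n).map e.hom := by
        rw [Category.assoc, hid, Category.comp_id]
  _ = 0 := by rw [h0, Limits.zero_comp]

lemma noHoms_shift_tgt_iff {X Y : C} (m : ℤ) : NoHoms C X (Y⟦m⟧) ↔ NoHoms C X Y := by
  constructor
  · intro h n f
    have h0 := h (n - m) (f ≫ (shiftFunctorAdd' C m (n - m) n (by ring)).hom.app Y)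
    have : f = (f ≫ (shiftFunctorAdd' C m (n - m) n (by ring)).hom.app Y) ≫
        (shiftFunctorAdd' C m (n - m) n (by ring)).inv.app Y := by simp
    rw [this, h0, Limits.zero_comp]
  · intro h n f
    have h0 := h (m + n) (f ≫ (shiftFunctorAdd' C m n (m + n) rfl).inv.app Y)
    have : f = (f ≫ (shiftFunctorAdd' C m n (m + n) rfl).inv.app Y) ≫
        (shiftFunctorAdd' C m n (m + n) rfl).hom.app Y := by simp
    rw [this, h0, Limits.zero_comp]

lemma noHoms_shift_src_iff {X Y : C} (m : ℤ) : NoHoms C (X⟦m⟧) Y ↔ NoHoms C X Y := by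
  constructor
  · intro h n f
    apply (shiftFunctor C m).map_injective
    have h0 := h (n + m) ((shiftFunctor C m).map f ≫ (shiftFunctorAdd' C n m (n + m) rfl).inv.app Y)
    have : (shiftFunctor C m).map f =
        ((shiftFunctor C m).map f ≫ (shiftFunctorAdd' C n m (n + m) rfl).inv.app Y) ≫
          (shiftFunctorAdd' C n m (n + m) rfl).hom.app Y := by simp
    rw [this, h0, Limits.zero_comp, Functor.map_zero]
  · intro h n f
    apply (shiftFunctor C (-m)).map_injective
    have h0 := h (n + -m) ((shiftEquiv C m).unitIso.hom.app X ≫ (shiftFunctor C (-m)).map f ≫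
      (shiftFunctorAdd' C n (-m) (n + -m) rfl).inv.app Y)
    have : (shiftFunctor C (-m)).map f =
        (shiftEquiv C m).unitIso.inv.app X ≫
          ((shiftEquiv C m).unitIso.hom.app X ≫ (shiftFunctor C (-m)).map f ≫
            (shiftFunctorAdd' C n (-m) (n + -m) rfl).inv.app Y) ≫
          (shiftFunctorAdd' C n (-m) (n + -m) rfl).hom.app Y := by simp; erw [Iso.hom_inv_id_app_assoc, Category.assoc, Iso.inv_hom_id_app, Category.comp_id]; rfl
    rw [this, h0, Limits.zero_comp, Limits.comp_zero, Functor.map_zero]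
    exact rfl

lemma noHoms_obj₂_contra {W : C} (T : Triangle C) (hT : T ∈ distTriang C)
    (h₁ : NoHoms C T.obj₁ W) (h₃ : NoHoms C T.obj₃ W) : NoHoms C T.obj₂ W := by
  intro n f
  obtain ⟨g, hg⟩ := Triangle.yoneda_exact₂ T hT f (h₁ n _)
  rw [hg, h₃ n g, Limits.comp_zero]

lemma noHoms_obj₂_co {W : C} (T : Triangle C) (hT : T ∈ distTriang C)
    (h₁ : NoHoms C W T.obj₁) (h₃ : NoHoms C W T.obj₃) : NoHoms C W T.obj₂ := by
  intro n f
  apply (shiftFunctor C (-n)).map_injective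
  set f' : W⟦(-n : ℤ)⟧ ⟶ T.obj₂ :=
    (shiftFunctor C (-n)).map f ≫ (shiftEquiv C n).unitIso.inv.app T.obj₂ with hf'
  have hf'0 : f' ≫ T.mor₂ = 0 := by
    have hnat : (shiftFunctor C (-n)).map ((shiftFunctor C n).map T.mor₂) ≫
        (shiftEquiv C n).unitIso.inv.app T.obj₃ =
        (shiftEquiv C n).unitIso.inv.app T.obj₂ ≫ T.mor₂ := by
      exact (shiftEquiv C n).unitIso.inv.naturality T.mor₂
    erw [hf', Category.assoc, ← hnat, ← Category.assoc, ← Functor.map_comp,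
      h₃ n (f ≫ (shiftFunctor C n).map T.mor₂), Functor.map_zero, Limits.zero_comp]
  obtain ⟨g, hg⟩ := Triangle.coyoneda_exact₂ T hT f' hf'0
  have hg0 : g = 0 := noHoms_zero ((noHoms_shift_src_iff (-n)).mpr h₁) g
  have : f' = 0 := by rw [hg, hg0, Limits.zero_comp]
  have : (shiftFunctor C (-n)).map f =
      f' ≫ (shiftEquiv C n).unitIso.hom.app T.obj₂ := by erw [hf', Category.assoc, Iso.inv_hom_id_app, Category.comp_id]
  rw [this, ‹f' = 0›, Limits.zero_comp, Functor.map_zero]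
  exact rfl

lemma genTriang_noHoms_contra {S : Set C} {A W : C} (hA : genTriang C S A)
    (hS : ∀ s ∈ S, NoHoms C s W) : NoHoms C A W := by
  induction hA with
  | of X hX => exact hS X hX
  | isZero X hX => intro n f; exact hX.eq_of_src f 0
  | iso e hX ih => exact noHoms_of_iso_src e ih
  | shift X n hX ih => exact (noHoms_shift_src_iff n).mpr ih
  | ext₂ T hT h₁ h₃ ih₁ ih₃ => exact noHoms_obj₂_contra T hT ih₁ ih₃

lemma genTriang_noHoms_co {S : Set C} {A W : C} (hA : genTriang C S A)
    (hS : ∀ s ∈ S, NoHoms C W s) : NoHoms C W A := by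
  induction hA with
  | of X hX => exact hS X hX
  | isZero X hX => intro n f; exact ((shiftFunctor C n).map_isZero hX).eq_of_tgt f 0
  | iso e hX ih => exact noHoms_of_iso_tgt e ih
  | shift X n hX ih => exact (noHoms_shift_tgt_iff n).mpr ih
  | ext₂ T hT h₁ h₃ ih₁ ih₃ => exact noHoms_obj₂_co T hT ih₁ ih₃

/-- The property of `u : X ⟶ Y` being the projection to a "left mutation"-type cone,
relative to a class `P` of objects: maps from `X` to `P`-objects factor uniquely through `u`. -/
def GoodCone {X Y : C} (u : X ⟶ Y) (P : C → Prop) : Prop :=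
  (∀ W, P W → ∀ v : X ⟶ W, ∃ w : Y ⟶ W, v = u ≫ w) ∧
  (∀ W, P W → ∀ w : Y ⟶ W, u ≫ w = 0 → w = 0)

lemma goodCone_of_triangle {P : C → Prop} {A X Y : C} (f : A ⟶ X) (g : X ⟶ Y)
    (h : Y ⟶ A⟦(1 : ℤ)⟧) (hT : Triangle.mk f g h ∈ distTriang C)
    (hA : ∀ W, P W → NoHoms C A W) : GoodCone g P := by
  constructor
  · intro W hW v
    obtain ⟨w, hw⟩ := Triangle.yoneda_exact₂ _ hT v (noHoms_zero (hA W hW) _)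
    exact ⟨w, hw⟩
  · intro W hW w hw
    obtain ⟨g', hg'⟩ := Triangle.yoneda_exact₃ _ hT w hw
    erw [hg', noHoms_zero ((noHoms_shift_src_iff 1).mpr (hA W hW)) g', Limits.comp_zero]
    exact rfl

lemma goodCone_comp {P : C → Prop} {X Y Z : C} {u : X ⟶ Y} {v : Y ⟶ Z}
    (hu : GoodCone u P) (hv : GoodCone v P) : GoodCone (u ≫ v) P := by
  constructor
  · intro W hW f
    obtain ⟨w₁, hw₁⟩ := hu.1 W hW f
    obtain ⟨w₂, hw₂⟩ := hv.1 W hW w₁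
    exact ⟨w₂, by rw [hw₁, hw₂, Category.assoc]⟩
  · intro W hW w hw
    exact hv.2 W hW w (hu.2 W hW (v ≫ w) (by rw [← Category.assoc]; exact hw))

lemma goodCone_precomp_iso {P : C → Prop} {X X' Y : C} {u : X ⟶ Y} (e : X' ≅ X)
    (hu : GoodCone u P) : GoodCone (e.hom ≫ u) P := by
  constructor
  · intro W hW v
    obtain ⟨w, hw⟩ := hu.1 W hW (e.inv ≫ v)
    exact ⟨w, by rw [Category.assoc, ← hw, ← Category.assoc, e.hom_inv_id, Category.id_comp]⟩
  · intro W hW w hw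
    refine hu.2 W hW w ?_
    have : e.inv ≫ (e.hom ≫ u) ≫ w = 0 := by rw [hw, Limits.comp_zero]
    simpa using this

lemma goodCone_shift {P : C → Prop} {X Y : C} {u : X ⟶ Y} (hu : GoodCone u P)
    (hP : ∀ (W : C) (k : ℤ), P W → P (W⟦k⟧)) (m : ℤ) :
    GoodCone ((shiftFunctor C m).map u) P := by
  set e := shiftEquiv C m with he
  constructor
  · intro W hW v
    obtain ⟨w', hw'⟩ := hu.1 (W⟦(-m : ℤ)⟧) (hP W (-m) hW)
      (e.unitIso.hom.app X ≫ (shiftFunctor C (-m)).map v)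
    refine ⟨(shiftFunctor C m).map w' ≫ e.counitIso.hom.app W, ?_⟩
    have h1 : (shiftFunctor C m).map u ≫ (shiftFunctor C m).map w' ≫ e.counitIso.hom.app W =
        (shiftFunctor C m).map (u ≫ w') ≫ e.counitIso.hom.app W := by
      erw [Functor.map_comp, Category.assoc]
    have hnat : (shiftFunctor C m).map ((shiftFunctor C (-m)).map v) ≫ e.counitIso.hom.app W =
        e.counitIso.hom.app (X⟦m⟧) ≫ v := e.counitIso.hom.naturality v
    have hid : (shiftFunctor C m).map (e.unitIso.hom.app X) ≫ e.counitIso.hom.app (X⟦m⟧) =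
        𝟙 (X⟦m⟧) := e.functor_unitIso_comp X
    erw [h1, ← hw', Functor.map_comp, Category.assoc, hnat, ← Category.assoc, hid,
      Category.id_comp]
  · intro W hW w hw
    apply (shiftFunctor C (-m)).map_injective
    have hw'' : u ≫ e.unitIso.hom.app Y ≫ (shiftFunctor C (-m)).map w = 0 := by
      have hnat : u ≫ e.unitIso.hom.app Y =
          e.unitIso.hom.app X ≫ (shiftFunctor C (-m)).map ((shiftFunctor C m).map u) :=
        e.unitIso.hom.naturality u
      erw [← Category.assoc, hnat, Category.assoc, ← Functor.map_comp, hw, Functor.map_zero,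
        Limits.comp_zero]
    have h0 := hu.2 (W⟦(-m : ℤ)⟧) (hP W (-m) hW) _ hw''
    have : (shiftFunctor C (-m)).map w =
        e.unitIso.inv.app Y ≫ (e.unitIso.hom.app Y ≫ (shiftFunctor C (-m)).map w) := by erw [Iso.inv_hom_id_app_assoc]; rfl
    rw [this, h0, Limits.comp_zero, Functor.map_zero]
    exact rfl

lemma iso_of_goodCones {P : C → Prop} {X Y Y' : C} {u : X ⟶ Y} {u' : X ⟶ Y'}
    (hu : GoodCone u P) (hu' : GoodCone u' P) (hY : P Y) (hY' : P Y') :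
    Nonempty (Y ≅ Y') := by
  obtain ⟨φ, hφ⟩ := hu.1 Y' hY' u'
  obtain ⟨ψ, hψ⟩ := hu'.1 Y hY u
  have h1 : φ ≫ ψ = 𝟙 Y := by
    rw [← sub_eq_zero]
    refine hu.2 Y hY _ ?_
    rw [Preadditive.comp_sub, Category.comp_id, ← Category.assoc, ← hφ, ← hψ, sub_self]
  have h2 : ψ ≫ φ = 𝟙 Y' := by
    rw [← sub_eq_zero]
    refine hu'.2 Y' hY' _ ?_
    rw [Preadditive.comp_sub, Category.comp_id, ← Category.assoc, ← hψ, ← hφ, sub_self]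
  exact ⟨⟨φ, ψ, h1, h2⟩⟩

lemma nonempty_iso_of_shift_iso {Y Y' : C} (e : Y⟦(1 : ℤ)⟧ ≅ Y'⟦(1 : ℤ)⟧) :
    Nonempty (Y ≅ Y') :=
  ⟨(shiftEquiv C (1 : ℤ)).unitIso.app Y ≪≫ (shiftFunctor C (-1 : ℤ)).mapIso e ≪≫
    ((shiftEquiv C (1 : ℤ)).unitIso.app Y').symm⟩

lemma isLeftMutation_goodCone {S : Set C} {X Y : C} (h : IsLeftMutation C S X Y)
    {P : C → Prop} (hP : ∀ W, P W → ∀ s ∈ S, NoHoms C s W) :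
    ∃ u : X ⟶ Y, GoodCone u P := by
  obtain ⟨-, -, A, f, g, hh, hA, hT⟩ := h
  exact ⟨g, goodCone_of_triangle f g hh hT
    (fun W hW => genTriang_noHoms_contra hA (hP W hW))⟩

lemma isLeftMutation_unique {S : Set C} {X Y Y' : C}
    (h : IsLeftMutation C S X Y) (h' : IsLeftMutation C S X Y') : Nonempty (Y ≅ Y') := by
  set P : C → Prop := fun W => ∀ s ∈ S, NoHoms C s W with hPdef
  obtain ⟨u, hu⟩ := isLeftMutation_goodCone h (fun W hW => hW)
  obtain ⟨u', hu'⟩ := isLeftMutation_goodCone h' (fun W hW => hW)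
  exact iso_of_goodCones hu hu' h.2.1 h'.2.1

end Lemmas

section Main

set_option linter.unusedSectionVars false

variable {C}

lemma singleton_noHoms {Z W : C} (h : NoHoms C Z W) :
    ∀ s ∈ ({Z} : Set C), NoHoms C s W := by
  rintro s hs
  rwa [Set.eq_of_mem_singleton hs]

lemma singleton_noHoms' {Z W : C} (h : NoHoms C W Z) :
    ∀ s ∈ ({Z} : Set C), NoHoms C W s := by
  rintro s hs
  rwa [Set.eq_of_mem_singleton hs]

/-- The key computation behind the braid relation:
`L_{L_a b} L_a c ≅ L_a L_b c` (all taken with the `[-1]` normalization). -/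
lemma braid_main {a b c B D G P Q : C}
    (hba : NoHoms C b a)
    (m1 : IsLeftMutation C {a} b (B⟦(1:ℤ)⟧))
    (m2 : IsLeftMutation C {a} c (D⟦(1:ℤ)⟧))
    (m3 : IsLeftMutation C {B} D (G⟦(1:ℤ)⟧))
    (m4 : IsLeftMutation C {b} c (P⟦(1:ℤ)⟧))
    (m5 : IsLeftMutation C {a} P (Q⟦(1:ℤ)⟧)) :
    Nonempty (G ≅ Q) := by
  obtain ⟨hb_lo, hB_ro, A₁, f₁, g₁, e₁, hA₁, hT₁⟩ := m1
  obtain ⟨hc_lo, hD_ro, A₂, f₂, g₂, e₂, hA₂, hT₂⟩ := m2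
  obtain ⟨hD_lo, hG_ro, A₃, f₃, g₃, e₃, hA₃, hT₃⟩ := m3
  obtain ⟨hc_lo', hP_ro, A₄, f₄, g₄, e₄, hA₄, hT₄⟩ := m4
  obtain ⟨hP_lo, hQ_ro, A₅, f₅, g₅, e₅, hA₅, hT₅⟩ := m5
  set P₀ : C → Prop := fun W => NoHoms C a W ∧ NoHoms C b W with hP₀
  have hP₀shift : ∀ (W : C) (k : ℤ), P₀ W → P₀ (W⟦k⟧) :=
    fun W k hW => ⟨(noHoms_shift_tgt_iff k).mpr hW.1, (noHoms_shift_tgt_iff k).mpr hW.2⟩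
  -- graded `Hom`s from `B = L_a b [-1]` into `P₀`-objects vanish
  have hBW : ∀ W, P₀ W → NoHoms C B W := by
    intro W hW
    have h1 : NoHoms C ((Triangle.mk f₁ g₁ e₁).rotate.obj₂) W := by
      apply noHoms_obj₂_contra _ (rot_of_distTriang _ hT₁)
      · exact hW.2
      · exact (noHoms_shift_src_iff 1).mpr
          (genTriang_noHoms_contra hA₁ (singleton_noHoms hW.1))
    have h1' : NoHoms C (B⟦(1:ℤ)⟧) W := h1
    exact (noHoms_shift_src_iff 1).mp h1'
  -- good cone properties
  have gc₂ : GoodCone (g₂ : c ⟶ D⟦(1:ℤ)⟧) P₀ :=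
    goodCone_of_triangle f₂ g₂ e₂ hT₂
      (fun W hW => genTriang_noHoms_contra hA₂ (singleton_noHoms hW.1))
  have gc₃ : GoodCone (g₃ : D ⟶ G⟦(1:ℤ)⟧) P₀ :=
    goodCone_of_triangle f₃ g₃ e₃ hT₃
      (fun W hW => genTriang_noHoms_contra hA₃ (singleton_noHoms (hBW W hW)))
  have gc₄ : GoodCone (g₄ : c ⟶ P⟦(1:ℤ)⟧) P₀ :=
    goodCone_of_triangle f₄ g₄ e₄ hT₄
      (fun W hW => genTriang_noHoms_contra hA₄ (singleton_noHoms hW.2))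
  have gc₅ : GoodCone (g₅ : P ⟶ Q⟦(1:ℤ)⟧) P₀ :=
    goodCone_of_triangle f₅ g₅ e₅ hT₅
      (fun W hW => genTriang_noHoms_contra hA₅ (singleton_noHoms hW.1))
  let eD : ((D⟦(1:ℤ)⟧)⟦(-1:ℤ)⟧ : C) ≅ D := ((shiftEquiv C (1:ℤ)).unitIso.app D).symm
  let eP : ((P⟦(1:ℤ)⟧)⟦(-1:ℤ)⟧ : C) ≅ P := ((shiftEquiv C (1:ℤ)).unitIso.app P).symm
  have gcG : GoodCone ((shiftFunctor C (-1:ℤ)).map g₂ ≫ (eD.hom ≫ g₃)) P₀ :=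
    goodCone_comp (goodCone_shift gc₂ hP₀shift (-1)) (goodCone_precomp_iso eD gc₃)
  have gcQ : GoodCone ((shiftFunctor C (-1:ℤ)).map g₄ ≫ (eP.hom ≫ g₅)) P₀ :=
    goodCone_comp (goodCone_shift gc₄ hP₀shift (-1)) (goodCone_precomp_iso eP gc₅)
  -- orthogonality of the two targets
  have hQa : NoHoms C a (Q⟦(1:ℤ)⟧) := hQ_ro a rfl
  have hQb : NoHoms C b (Q⟦(1:ℤ)⟧) := by
    have h1 : NoHoms C b ((Triangle.mk f₅ g₅ e₅).rotate.obj₂) := by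
      apply noHoms_obj₂_co _ (rot_of_distTriang _ hT₅)
      · exact (noHoms_shift_tgt_iff 1).mp (hP_ro b rfl)
      · exact (noHoms_shift_tgt_iff 1).mpr
          (genTriang_noHoms_co hA₅ (singleton_noHoms' hba))
    exact h1
  have haB : NoHoms C a B := (noHoms_shift_tgt_iff 1).mp (hB_ro a rfl)
  have hGa : NoHoms C a (G⟦(1:ℤ)⟧) := by
    have h1 : NoHoms C a ((Triangle.mk f₃ g₃ e₃).rotate.obj₂) := by
      apply noHoms_obj₂_co _ (rot_of_distTriang _ hT₃)
      · exact (noHoms_shift_tgt_iff 1).mp (hD_ro a rfl)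
      · exact (noHoms_shift_tgt_iff 1).mpr
          (genTriang_noHoms_co hA₃ (singleton_noHoms' haB))
    exact h1
  have hGb : NoHoms C b (G⟦(1:ℤ)⟧) := by
    have h1 : NoHoms C ((Triangle.mk f₁ g₁ e₁).obj₂) (G⟦(1:ℤ)⟧) := by
      apply noHoms_obj₂_contra _ hT₁
      · exact genTriang_noHoms_contra hA₁ (singleton_noHoms hGa)
      · exact (noHoms_shift_src_iff 1).mpr (hG_ro B rfl)
    exact h1
  exact nonempty_iso_of_shift_iso
    (iso_of_goodCones gcG gcQ ⟨hGa, hGb⟩ ⟨hQa, hQb⟩).some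

end Main

/-- The standard mutation operations on exceptional collections of length `n`
satisfy the braid relations `σ_i σ_{i+1} σ_i = σ_{i+1} σ_i σ_{i+1}` and `σ_i σ_j = σ_j σ_i` for
`|i - j| > 1`, hence generate an action of the `n`-string braid group. -/
theorem braid_relations (hft : FiniteType C) (n : ℕ) (E : ℕ → C)
    (hE : ExcCollection C n E) :
    (∀ i, i + 3 ≤ n → ∀ E₁ E₂ E₃ F₁ F₂ F₃ : ℕ → C,
      MutAt C i E E₁ → MutAt C (i + 1) E₁ E₂ → MutAt C i E₂ E₃ →
      MutAt C (i + 1) E F₁ → MutAt C i F₁ F₂ → MutAt C (i + 1) F₂ F₃ →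
      ∀ j, Nonempty (E₃ j ≅ F₃ j)) ∧
    (∀ i j, i + 1 < j → j + 2 ≤ n → ∀ E₁ E₂ F₁ F₂ : ℕ → C,
      MutAt C i E E₁ → MutAt C j E₁ E₂ →
      MutAt C j E F₁ → MutAt C i F₁ F₂ →
      ∀ k, Nonempty (E₂ k ≅ F₂ k)) := by
  constructor
  · -- the braid relation σ_i σ_{i+1} σ_i = σ_{i+1} σ_i σ_{i+1}
    intro i hi E₁ E₂ E₃ F₁ F₂ F₃ h1 h2 h3 k1 k2 k3 j
    obtain ⟨h1e, h1s, h1m⟩ := h1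
    obtain ⟨h2e, h2s, h2m⟩ := h2
    obtain ⟨h3e, h3s, h3m⟩ := h3
    obtain ⟨k1e, k1s, k1m⟩ := k1
    obtain ⟨k2e, k2s, k2m⟩ := k2
    obtain ⟨k3e, k3s, k3m⟩ := k3
    have e12 : i + 1 + 1 = i + 2 := by omega
    rw [e12] at h2e h2s h2m k1e k1s k1m k3e k3s k3m
    have hba : NoHoms C (E (i+1)) (E i) := hE.2 i (i+1) (by omega) (by omega)
    have hE1i2 : E₁ (i+2) = E (i+2) := h1e _ (by omega) (by omega)
    rw [h1s, hE1i2] at h2m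
    have hE2i : E₂ i = E₁ i := h2e _ (by omega) (by omega)
    rw [hE2i] at h3m
    have hF1i : F₁ i = E i := k1e _ (by omega) (by omega)
    rw [hF1i] at k2m
    have hF2i1 : F₂ (i+1) = E i := by rw [k2s, hF1i]
    have hF2i2 : F₂ (i+2) = E (i+1) := by rw [k2e _ (by omega) (by omega), k1s]
    rw [hF2i1, hF2i2] at k3m
    rcases eq_or_ne j i with rfl | hji
    · rw [k3e j (by omega) (by omega)]
      exact braid_main hba h1m h2m h3m k1m k2m
    rcases eq_or_ne j (i+1) with rfl | hji1
    · rw [h3s, hE2i]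
      exact nonempty_iso_of_shift_iso (isLeftMutation_unique h1m k3m).some
    rcases eq_or_ne j (i+2) with rfl | hji2
    · rw [h3e _ (by omega) (by omega), h2s, h1s, k3s, hF2i1]
      exact ⟨Iso.refl _⟩
    · rw [h3e _ (by omega) (by omega), h2e _ (by omega) (by omega),
        h1e _ (by omega) (by omega), k3e _ (by omega) (by omega),
        k2e _ (by omega) (by omega), k1e _ (by omega) (by omega)]
      exact ⟨Iso.refl _⟩
  · -- commutation σ_i σ_j = σ_j σ_i for |i - j| > 1
    intro i j hij hjn E₁ E₂ F₁ F₂ h1 h2 k1 k2 k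
    obtain ⟨h1e, h1s, h1m⟩ := h1
    obtain ⟨h2e, h2s, h2m⟩ := h2
    obtain ⟨k1e, k1s, k1m⟩ := k1
    obtain ⟨k2e, k2s, k2m⟩ := k2
    have hE1j : E₁ j = E j := h1e _ (by omega) (by omega)
    have hE1j1 : E₁ (j+1) = E (j+1) := h1e _ (by omega) (by omega)
    rw [hE1j, hE1j1] at h2m
    have hF1i : F₁ i = E i := k1e _ (by omega) (by omega)
    have hF1i1 : F₁ (i+1) = E (i+1) := k1e _ (by omega) (by omega)
    rw [hF1i, hF1i1] at k2m
    rcases eq_or_ne k i with rfl | hki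
    · rw [h2e _ (by omega) (by omega)]
      exact nonempty_iso_of_shift_iso (isLeftMutation_unique h1m k2m).some
    rcases eq_or_ne k (i+1) with rfl | hki1
    · rw [h2e _ (by omega) (by omega), h1s, k2s, hF1i]
      exact ⟨Iso.refl _⟩
    rcases eq_or_ne k j with rfl | hkj
    · rw [k2e _ (by omega) (by omega)]
      exact nonempty_iso_of_shift_iso (isLeftMutation_unique h2m k1m).some
    rcases eq_or_ne k (j+1) with rfl | hkj1
    · rw [h2s, hE1j, k2e _ (by omega) (by omega), k1s]
      exact ⟨Iso.refl _⟩
    · rw [h2e _ (by omega) (by omega), h1e _ (by omega) (by omega),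
        k2e _ (by omega) (by omega), k1e _ (by omega) (by omega)]
      exact ⟨Iso.refl _⟩
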